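/- Fix $y_0 \in \mathbb{Q}^* \setminus \{1\}$ and $m \geq 1$. Then there exist infinitely many $Z_0 \in \mathbb{Q}^*$ such that (i) $y_0 \neq Z_0^n$ for every $n \in \mathbb{Z}$, and (ii) the polynomial $(Z_0 - y_0)\bar h_m(T) + y_0 T \bar k_m(T) \in \mathbb{Q}[T]$ has no root in $\mathbb{Q}$. -/

import Mathlib

set_option maxHeartbeats 1000000

open Polynomial Finset

noncomputable def HKaux (a b : ℤ) : ℕ → Polynomial ℤ × Polynomial ℤ
  | 0 => (C (b - a), C b)
  | (n+1) => ((HKaux a b n).1 - X * (HKaux a b n).2,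
              (HKaux a b n).1 + (1 - X) * (HKaux a b n).2)

lemma exists_int_poly (q : Polynomial ℚ) :
    ∃ (D : ℤ) (P : Polynomial ℤ), D ≠ 0 ∧ P.map (Int.castRingHom ℚ) = C (D : ℚ) * q := by
  induction q using Polynomial.induction_on' with
  | add p q hp hq =>
      obtain ⟨D1, P1, hD1, hP1⟩ := hp
      obtain ⟨D2, P2, hD2, hP2⟩ := hq
      refine ⟨D1 * D2, C D2 * P1 + C D1 * P2, mul_ne_zero hD1 hD2, ?_⟩
      simp only [Polynomial.map_add, Polynomial.map_mul, map_C, hP1, hP2,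
        Int.coe_castRingHom]
      push_cast
      rw [C_mul]
      ring
  | monomial n r =>
      refine ⟨(r.den : ℤ), monomial n r.num, Int.natCast_ne_zero.mpr r.den_nz, ?_⟩
      have hden : ((r.den : ℚ)) ≠ 0 := by
        exact_mod_cast r.den_nz
      have hv0 : ((r.num : ℚ)) = r * (r.den : ℚ) := (div_eq_iff hden).mp (r.num_div_den)
      rw [Polynomial.map_monomial, C_mul_monomial]
      congr 1
      rw [Int.coe_castRingHom]
      push_cast
      rw [hv0]
      ring

lemma sum_coeff_eval {F : Type*} [Field F] (φ : ℤ →+* F) (P : Polynomial ℤ) (N : ℕ)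
    (hN : P.natDegree ≤ N) (n d : ℤ) (hd : φ d ≠ 0) :
    φ (∑ i ∈ range (N+1), P.coeff i * n ^ i * d ^ (N - i))
      = φ d ^ N * (P.map φ).eval (φ n * (φ d)⁻¹) := by
  rw [Polynomial.eval_eq_sum_range'
    (lt_of_le_of_lt natDegree_map_le (Nat.lt_succ_of_le hN))]
  rw [map_sum, Finset.mul_sum]
  refine Finset.sum_congr rfl (fun i hi => ?_)
  have hile : i ≤ N := Nat.lt_succ_iff.mp (Finset.mem_range.mp hi)
  rw [Polynomial.coeff_map, map_mul, map_mul, map_pow, map_pow]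
  have hdN : φ d ^ N = φ d ^ (N - i) * φ d ^ i := by rw [← pow_add, Nat.sub_add_cancel hile]
  rw [hdN, mul_pow]
  have h1 : φ d ^ i * ((φ d)⁻¹) ^ i = 1 := by rw [← mul_pow, mul_inv_cancel₀ hd, one_pow]
  linear_combination (-(φ (P.coeff i) * φ n ^ i * φ d ^ (N - i))) * h1

lemma exists_prime_dvd_eval (P : Polynomial ℤ) (hP : 1 ≤ P.natDegree) (N : ℕ) :
    ∃ (p : ℕ) (s : ℤ), p.Prime ∧ N < p ∧ (p : ℤ) ∣ P.eval s := by
  by_cases h0 : P.eval 0 = 0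
  · obtain ⟨p, hpN, hp⟩ := Nat.exists_infinite_primes (N+1)
    exact ⟨p, 0, hp, by omega, by simp [h0]⟩
  · set c : ℤ := P.eval 0 with hc
    set M : ℤ := c * (Nat.factorial N : ℤ) with hM
    have hM0 : M ≠ 0 := mul_ne_zero h0 (by exact_mod_cast (Nat.factorial_pos N).ne')
    set Q : Polynomial ℤ := P.comp (C M * X) with hQdef
    have hQdeg : Q.natDegree = P.natDegree := by
      rw [hQdef, natDegree_comp, natDegree_C_mul_X _ hM0, mul_one]
    have hQ0 : Q ≠ 0 := fun hz => by rw [hz, natDegree_zero] at hQdeg; omega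
    have hQc : Q - C c ≠ 0 := by
      intro hz
      have hQe : Q = C c := sub_eq_zero.mp hz
      rw [hQe, natDegree_C] at hQdeg; omega
    have hQc' : Q + C c ≠ 0 := by
      intro hz
      have hQe : Q = -C c := eq_neg_of_add_eq_zero_left hz
      rw [hQe, natDegree_neg, natDegree_C] at hQdeg; omega
    have hfin : ({x | Q.IsRoot x} ∪ ({x | (Q - C c).IsRoot x} ∪ {x | (Q + C c).IsRoot x})).Finite :=
      (Polynomial.finite_setOf_isRoot hQ0).union
        ((Polynomial.finite_setOf_isRoot hQc).union (Polynomial.finite_setOf_isRoot hQc'))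
    obtain ⟨t, ht⟩ := hfin.infinite_compl.nonempty
    have h1 : ¬ Q.IsRoot t := fun hr => ht (Or.inl hr)
    have h2 : ¬ (Q - C c).IsRoot t := fun hr => ht (Or.inr (Or.inl hr))
    have h3 : ¬ (Q + C c).IsRoot t := fun hr => ht (Or.inr (Or.inr hr))
    have ht0 : Q.eval t ≠ 0 := h1
    have htc : Q.eval t ≠ c := fun hz => h2 (by simp [IsRoot.def, hz])
    have htc' : Q.eval t ≠ -c := fun hz => h3 (by simp [IsRoot.def, hz])
    have hQev : Q.eval t = P.eval (M * t) := by
      rw [hQdef, eval_comp, eval_mul, eval_C, eval_X]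
    have hdvd : M * t ∣ P.eval (M * t) - c := by
      simpa using Polynomial.sub_dvd_eval_sub (M * t) 0 P
    obtain ⟨e, he⟩ := hdvd
    set w : ℤ := 1 + (Nat.factorial N : ℤ) * t * e with hw
    have hPw : P.eval (M * t) = c * w := by
      rw [hw]
      linear_combination he + t * e * hM
    have hw0 : w ≠ 0 := fun hz => ht0 (by rw [hQev, hPw, hz, mul_zero])
    have hw1 : w ≠ 1 := fun hz => htc (by rw [hQev, hPw, hz, mul_one])
    have hw1' : w ≠ -1 := fun hz => htc' (by rw [hQev, hPw, hz]; ring)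
    have hwa : 2 ≤ w.natAbs := by
      rcases Int.natAbs_eq w with hew | hew <;> omega
    set p : ℕ := w.natAbs.minFac with hp
    have hpp : p.Prime := Nat.minFac_prime (by omega)
    have hpw : (p : ℤ) ∣ w := Int.dvd_natAbs.mp (Int.natCast_dvd_natCast.mpr (Nat.minFac_dvd _))
    have hpN : N < p := by
      by_contra hle
      push_neg at hle
      have hd1 : (p : ℤ) ∣ (Nat.factorial N : ℤ) :=
        Int.natCast_dvd_natCast.mpr (Nat.dvd_factorial hpp.pos hle)
      have hd2 : (p : ℤ) ∣ 1 := by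
        have := hpw.sub ((hd1.mul_right t).mul_right e)
        simpa [hw] using this
      have := Int.le_of_dvd one_pos hd2
      have := hpp.two_le
      omega
    exact ⟨p, M * t, hpp, hpN, by rw [hPw]; exact hpw.mul_left c⟩

theorem stmt_16
    (y0 : ℚ) (hy0 : y0 ≠ 0) (hy0' : y0 ≠ 1)
    (h k : ℕ → Polynomial ℚ)
    (hh0 : h 0 = Polynomial.C (1 - y0)) (hk0 : k 0 = 1)
    (hh : ∀ m, h (m + 1) = h m - Polynomial.X * k m)
    (hk : ∀ m, k (m + 1) = h m + (1 - Polynomial.X) * k m) :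
    ∀ m : ℕ, 1 ≤ m →
      {Z0 : ℚ | Z0 ≠ 0 ∧ (∀ n : ℤ, y0 ≠ Z0 ^ n) ∧
        ∀ t : ℚ, Polynomial.eval t
          (Polynomial.C (Z0 - y0) * h m + Polynomial.C y0 * Polynomial.X * k m) ≠ 0}.Infinite := by
  intro m hm
  obtain ⟨m', rfl⟩ : ∃ m'', m = m'' + 1 := ⟨m - 1, by omega⟩
  clear hm
  set m := m' + 1 with hmdef
  -- basic facts about y0
  set a : ℤ := y0.num with ha_def
  set b : ℤ := (y0.den : ℤ) with hb_def
  have hb0 : (0:ℤ) < b := by rw [hb_def]; exact_mod_cast y0.pos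
  have ha0 : a ≠ 0 := Rat.num_ne_zero.mpr hy0
  have hbQ : ((b:ℚ)) ≠ 0 := by
    simp only [hb_def]
    exact_mod_cast y0.den_nz
  have hay : ((a:ℚ)) = y0 * (b:ℚ) := by
    rw [ha_def, hb_def]
    push_cast
    exact (div_eq_iff (by exact_mod_cast y0.den_nz)).mp (y0.num_div_den)
  have h1y : (1:ℚ) - y0 ≠ 0 := sub_ne_zero.mpr (Ne.symm hy0')
  -- eval at 0
  have hev0 : ∀ j, (h j).eval 0 = 1 - y0 := by
    intro j
    induction j with
    | zero => rw [hh0]; simp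
    | succ i ih => rw [hh i]; simp [ih]
  -- coprimality of h and k
  have hcop : ∀ j, IsCoprime (h j) (k j) := by
    intro j
    induction j with
    | zero => rw [hk0]; exact isCoprime_one_right
    | succ i ih =>
      obtain ⟨u, v, huv⟩ := ih
      exact ⟨u * (1 - X) - v, u * X + v, by rw [hh i, hk i]; linear_combination huv⟩
  -- coprimality of h and X
  have hcopX : ∀ j, IsCoprime (h j) X := by
    intro j
    refine ⟨C (1 - y0)⁻¹, -(C (1 - y0)⁻¹ * (h j).divX), ?_⟩
    have hX := Polynomial.divX_mul_X_add (h j)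
    have hc0 : (h j).coeff 0 = 1 - y0 := by
      rw [Polynomial.coeff_zero_eq_eval_zero, hev0 j]
    calc C (1 - y0)⁻¹ * h j + -(C (1 - y0)⁻¹ * (h j).divX) * X
        = C (1 - y0)⁻¹ * ((h j).divX * X + C ((h j).coeff 0))
            - C (1 - y0)⁻¹ * (h j).divX * X := by rw [hX]; ring
      _ = C (1 - y0)⁻¹ * C (1 - y0) := by rw [hc0]; ring
      _ = 1 := by rw [← C_mul, inv_mul_cancel₀ h1y, C_1]
  -- coprimality of h j and h (j+1)
  have hcopH : ∀ j, IsCoprime (h j) (h (j+1)) := by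
    intro j
    have h2 : IsCoprime (h j) (X * k j) := (hcopX j).mul_right (hcop j)
    have h3 := (h2.neg_right).add_mul_left_right 1
    have h4 : h (j+1) = -(X * k j) + h j * 1 := by rw [hh j]; ring
    rw [h4]
    exact h3
  -- the scaled integer polynomials
  have hmap : ∀ j, (HKaux a b j).1.map (Int.castRingHom ℚ) = C (b:ℚ) * h j ∧
      (HKaux a b j).2.map (Int.castRingHom ℚ) = C (b:ℚ) * k j := by
    intro j
    induction j with
    | zero =>
      constructor
      · show (C (b - a)).map _ = _
        rw [Polynomial.map_C, hh0, Int.coe_castRingHom]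
        rw [← C_mul]
        congr 1
        push_cast
        rw [hay]; ring
      · show (C b).map _ = _
        rw [Polynomial.map_C, hk0, Int.coe_castRingHom, mul_one]
    | succ i ih =>
      obtain ⟨ih1, ih2⟩ := ih
      constructor
      · show ((HKaux a b i).1 - X * (HKaux a b i).2).map _ = _
        rw [Polynomial.map_sub, Polynomial.map_mul, Polynomial.map_X, ih1, ih2, hh i]
        ring
      · show ((HKaux a b i).1 + (1 - X) * (HKaux a b i).2).map _ = _
        rw [Polynomial.map_add, Polynomial.map_mul, Polynomial.map_sub, Polynomial.map_one,
          Polynomial.map_X, ih1, ih2, hk i]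
        ring
  -- degree bounds
  have hdeg : ∀ j, (HKaux a b j).1.natDegree ≤ j ∧ (HKaux a b j).2.natDegree ≤ j := by
    intro j
    induction j with
    | zero =>
      constructor
      · show (C (b - a)).natDegree ≤ 0
        exact le_of_eq (natDegree_C _)
      · show (C b).natDegree ≤ 0
        exact le_of_eq (natDegree_C _)
    | succ i ih =>
      obtain ⟨ih1, ih2⟩ := ih
      constructor
      · show ((HKaux a b i).1 - X * (HKaux a b i).2).natDegree ≤ i + 1
        refine le_trans (natDegree_sub_le _ _) (max_le (ih1.trans (Nat.le_succ i)) ?_)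
        refine le_trans natDegree_mul_le ?_
        rw [natDegree_X]
        omega
      · show ((HKaux a b i).1 + (1 - X) * (HKaux a b i).2).natDegree ≤ i + 1
        refine le_trans (natDegree_add_le _ _) (max_le (ih1.trans (Nat.le_succ i)) ?_)
        refine le_trans natDegree_mul_le ?_
        have h1X : (1 - X : Polynomial ℤ).natDegree ≤ 1 := by
          refine le_trans (natDegree_sub_le _ _) ?_
          simp
        omega
  -- top coefficients
  have hcoefftop : ∀ j, (HKaux a b (j+1)).1.coeff (j+1) = (-1)^(j+1) * b ∧
      (HKaux a b (j+1)).2.coeff (j+1) = (-1)^(j+1) * b := by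
    intro j
    induction j with
    | zero =>
      constructor
      · show (C (b - a) - X * C b).coeff 1 = _
        rw [coeff_sub, coeff_X_mul, coeff_C, coeff_C]
        norm_num
      · show (C (b - a) + (1 - X) * C b).coeff 1 = _
        rw [coeff_add, sub_mul, one_mul, coeff_sub, coeff_X_mul, coeff_C, coeff_C, coeff_C]
        norm_num
    | succ i ih =>
      obtain ⟨ih1, ih2⟩ := ih
      have hd1 := (hdeg (i+1)).1
      have hd2 := (hdeg (i+1)).2
      constructor
      · show ((HKaux a b (i+1)).1 - X * (HKaux a b (i+1)).2).coeff (i+2) = _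
        rw [coeff_sub, coeff_X_mul, ih2,
          coeff_eq_zero_of_natDegree_lt (lt_of_le_of_lt hd1 (by omega))]
        ring
      · show ((HKaux a b (i+1)).1 + (1 - X) * (HKaux a b (i+1)).2).coeff (i+2) = _
        rw [coeff_add, sub_mul, one_mul, coeff_sub, coeff_X_mul, ih2,
          coeff_eq_zero_of_natDegree_lt (lt_of_le_of_lt hd1 (by omega)),
          coeff_eq_zero_of_natDegree_lt (lt_of_le_of_lt hd2 (by omega))]
        ring
  set A1 : Polynomial ℤ := (HKaux a b m).1 with hA1_def
  set A2 : Polynomial ℤ := (HKaux a b (m+1)).1 with hA2_def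
  have hA1map : A1.map (Int.castRingHom ℚ) = C (b:ℚ) * h m := (hmap m).1
  have hA2map : A2.map (Int.castRingHom ℚ) = C (b:ℚ) * h (m+1) := (hmap (m+1)).1
  -- Bezout certificate over ℤ
  obtain ⟨u, v, huv⟩ := hcopH m
  obtain ⟨D1, U0, hD1, hU0⟩ := exists_int_poly u
  obtain ⟨D2, V0, hD2, hV0⟩ := exists_int_poly v
  set E : ℤ := D1 * D2 * b with hE_def
  have hE0 : E ≠ 0 := mul_ne_zero (mul_ne_zero hD1 hD2) (by omega)
  have hbez : U0 * A1 * C D2 + V0 * A2 * C D1 = C E := by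
    apply Polynomial.map_injective (Int.castRingHom ℚ) Int.cast_injective
    rw [Polynomial.map_add, Polynomial.map_mul, Polynomial.map_mul, Polynomial.map_mul,
      Polynomial.map_mul, Polynomial.map_C, Polynomial.map_C, Polynomial.map_C,
      hU0, hV0, hA1map, hA2map, Int.coe_castRingHom]
    simp only [Int.coe_castRingHom, hE_def]
    push_cast
    rw [C_mul, C_mul]
    linear_combination (C (D1:ℚ) * C (D2:ℚ) * C (b:ℚ)) * huv
  -- choose the prime
  have hA1deg1 : 1 ≤ A1.natDegree := by
    have hne : A1.coeff m ≠ 0 := by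
      rw [hA1_def, hmdef, (hcoefftop m').1]
      intro hz
      rcases mul_eq_zero.mp hz with hz1 | hz1
      · exact pow_ne_zero _ (by norm_num : (-1:ℤ) ≠ 0) hz1
      · omega
    have := le_natDegree_of_ne_zero hne
    omega
  set N0 : ℕ := (a*b).natAbs + E.natAbs with hN0_def
  obtain ⟨p, s0, hpp, hpN0, hps0⟩ := exists_prime_dvd_eval A1 hA1deg1 N0
  haveI : Fact p.Prime := ⟨hpp⟩
  set Abar1 : Polynomial (ZMod p) := A1.map (Int.castRingHom (ZMod p)) with hAbar1_def
  set Abar2 : Polynomial (ZMod p) := A2.map (Int.castRingHom (ZMod p)) with hAbar2_def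
  have hs0bar : Abar1.eval ((s0 : ZMod p)) = 0 := by
    rw [hAbar1_def, Polynomial.eval_intCast_map, Int.coe_castRingHom,
      ZMod.intCast_zmod_eq_zero_iff_dvd]
    exact hps0
  -- choose z avoiding the image
  set f : ZMod p → ZMod p :=
    fun s => (a : ZMod p) * Abar2.eval s * (((b : ZMod p)) * Abar1.eval s)⁻¹ with hf_def
  set Sf : Finset (ZMod p) := Finset.univ.filter (fun s => Abar1.eval s ≠ 0) with hSf_def
  set T : Finset (ZMod p) := Sf.image f with hT_def
  have hTcard : T.card < p := by
    have hSf : Sf ⊆ Finset.univ.erase ((s0 : ZMod p)) := by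
      intro x hx
      refine Finset.mem_erase.mpr ⟨fun hxe => (Finset.mem_filter.mp hx).2 (hxe ▸ hs0bar),
        Finset.mem_univ x⟩
    calc T.card ≤ Sf.card := Finset.card_image_le
      _ ≤ (Finset.univ.erase ((s0 : ZMod p))).card := Finset.card_le_card hSf
      _ < p := by
          rw [Finset.card_erase_of_mem (Finset.mem_univ _), Finset.card_univ, ZMod.card]
          have := hpp.two_le
          omega
  obtain ⟨z, hzT⟩ : ∃ z : ZMod p, z ∉ T := by
    by_contra hno
    push_neg at hno
    have hsub : (Finset.univ : Finset (ZMod p)) ⊆ T := fun x _ => hno x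
    have := Finset.card_le_card hsub
    rw [Finset.card_univ, ZMod.card] at this
    omega
  -- the infinite family
  set J : ℕ := a.natAbs + y0.den + 2 with hJ_def
  refine Set.infinite_of_injective_forall_mem
    (f := fun j : ℕ => ((z.val + p * (J + j) : ℕ) : ℚ)) ?_ ?_
  · intro i j hij
    simp only [Nat.cast_inj] at hij
    have h2 : p * (J + i) = p * (J + j) := Nat.add_left_cancel hij
    have h3 := Nat.eq_of_mul_eq_mul_left hpp.pos h2
    omega
  intro j
  set n0 : ℕ := z.val + p * (J + j) with hn0_def
  have hn0J : J ≤ n0 := by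
    have h1 : J + j ≤ p * (J + j) := Nat.le_mul_of_pos_left _ hpp.pos
    omega
  set Z0 : ℚ := (n0 : ℚ) with hZ0_def
  have hZ0ge : ((J : ℚ)) ≤ Z0 := by rw [hZ0_def]; exact_mod_cast hn0J
  have hJval : ((J:ℚ)) = (a.natAbs : ℚ) + (y0.den : ℚ) + 2 := by rw [hJ_def]; push_cast; ring
  have hdenQpos : (0:ℚ) < (b:ℚ) := by exact_mod_cast hb0
  have hbden : ((y0.den:ℚ)) = (b:ℚ) := by rw [hb_def]; push_cast; ring
  have habs_eq : |y0| * (b:ℚ) = |(a:ℚ)| := by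
    rw [hay, abs_mul, abs_of_pos hdenQpos]
  have hnatAbsQ : ((a.natAbs:ℚ)) = |(a:ℚ)| := by rw [Nat.cast_natAbs, Int.cast_abs]
  have hdenQ1 : (1:ℚ) ≤ (b:ℚ) := by exact_mod_cast hb0
  have haQ1 : (1:ℚ) ≤ |(a:ℚ)| := by
    have h1 : (1:ℤ) ≤ |a| := Int.one_le_abs ha0
    have h2 : ((|a|:ℤ):ℚ) = |(a:ℚ)| := Int.cast_abs
    exact_mod_cast h2 ▸ (by exact_mod_cast h1 : (1:ℚ) ≤ ((|a|:ℤ):ℚ))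
  have habs : |y0| ≤ (a.natAbs : ℚ) := by
    rw [hnatAbsQ]
    nlinarith [abs_nonneg y0]
  have hZ0gt : |y0| < Z0 := by
    rw [hJval, hbden] at hZ0ge
    linarith
  have hZ1 : (1:ℚ) < Z0 := by
    rw [hJval, hbden] at hZ0ge
    have h1 : (0:ℚ) ≤ (a.natAbs:ℚ) := by positivity
    linarith
  have hy0abs_pos : 0 < |y0| := abs_pos.mpr hy0
  have hZy : 1 < Z0 * |y0| := by
    have h3 : ((b:ℚ)) < Z0 := by
      rw [hJval, hbden] at hZ0ge
      have h1 : (0:ℚ) ≤ (a.natAbs:ℚ) := by positivity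
      linarith
    nlinarith [hy0abs_pos]
  simp only [Set.mem_setOf_eq]
  refine ⟨by linarith, ?_, ?_⟩
  · -- power condition
    intro n heq
    match n with
    | Int.ofNat nn =>
      rw [Int.ofNat_eq_coe, zpow_natCast] at heq
      cases nn with
      | zero => rw [pow_zero] at heq; exact hy0' heq
      | succ kk =>
        have h1 : Z0 ≤ Z0 ^ (kk+1) := le_self_pow₀ hZ1.le (Nat.succ_ne_zero kk)
        have h2 : y0 ≤ |y0| := le_abs_self y0
        rw [← heq] at h1
        linarith
    | Int.negSucc kk =>
      rw [zpow_negSucc] at heq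
      have hp0 : 0 < Z0 ^ (kk+1) := pow_pos (by linarith) _
      have habs1 : |y0| * Z0 ^ (kk+1) = 1 := by
        rw [heq, abs_inv, abs_of_pos hp0]
        field_simp
      have h1 : Z0 ≤ Z0 ^ (kk+1) := le_self_pow₀ hZ1.le (Nat.succ_ne_zero kk)
      nlinarith [hy0abs_pos]
  · -- no rational roots
    intro t heval
    set n : ℤ := t.num with hn_def
    set d : ℤ := (t.den : ℤ) with hd_def
    have hd0 : d ≠ 0 := by
      rw [hd_def]
      exact_mod_cast t.den_nz
    set G : Polynomial ℤ := C (b * (n0:ℤ)) * A1 - C a * A2 with hG_def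
    have hGmap0 : (G.map (Int.castRingHom ℚ)).eval t = 0 := by
      rw [hG_def, Polynomial.map_sub, Polynomial.map_mul, Polynomial.map_mul,
        Polynomial.map_C, Polynomial.map_C, eq_intCast, eq_intCast, hA1map, hA2map]
      have he3 : (h (m+1)).eval t = (h m).eval t - t * (k m).eval t := by
        rw [hh m]; simp
      simp only [eval_sub, eval_mul, eval_C, Polynomial.eval_intCast]
      rw [he3]
      have heval' : (Z0 - y0) * (h m).eval t + y0 * t * (k m).eval t = 0 := by
        simpa only [eval_add, eval_mul, eval_C, eval_X] using heval
      have hZn0 : ((b * (n0:ℤ) : ℤ) : ℚ) = (b:ℚ) * Z0 := by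
        rw [hZ0_def]; push_cast; ring
      rw [hZn0]
      linear_combination ((b:ℚ)*(b:ℚ)) * heval'
        + (-(b:ℚ)*((h m).eval t - t * (k m).eval t)) * hay
    have hGdeg : G.natDegree ≤ m + 1 := by
      rw [hG_def]
      refine le_trans (natDegree_sub_le _ _) (max_le ?_ ?_)
      · refine le_trans natDegree_mul_le ?_
        rw [natDegree_C]
        have := (hdeg m).1
        rw [← hA1_def] at this
        omega
      · refine le_trans natDegree_mul_le ?_
        rw [natDegree_C]
        have := (hdeg (m+1)).1
        rw [← hA2_def] at this
        omega
    have hdQ : ((Int.castRingHom ℚ) d) ≠ 0 := by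
      rw [eq_intCast]
      exact_mod_cast hd0
    have hQeq := sum_coeff_eval (Int.castRingHom ℚ) G (m+1) hGdeg n d hdQ
    have ht_eq : (Int.castRingHom ℚ) n * ((Int.castRingHom ℚ) d)⁻¹ = t := by
      rw [eq_intCast, eq_intCast, ← div_eq_mul_inv, hn_def, hd_def]
      push_cast
      exact t.num_div_den
    rw [ht_eq, hGmap0, mul_zero, eq_intCast] at hQeq
    have hS0 : (∑ i ∈ range (m+1+1), G.coeff i * n^i * d^(m+1-i)) = 0 := by
      exact_mod_cast hQeq
    have hA1topz : A1.coeff (m+1) = 0 := by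
      rw [hA1_def]
      exact coeff_eq_zero_of_natDegree_lt (lt_of_le_of_lt (hdeg m).1 (lt_add_one m))
    have hA2top : A2.coeff (m+1) = (-1:ℤ)^(m+1) * b := by
      rw [hA2_def]
      exact (hcoefftop m).1
    have hGtop : G.coeff (m+1) = -(a * ((-1:ℤ)^(m+1) * b)) := by
      rw [hG_def, coeff_sub, coeff_C_mul, coeff_C_mul, hA1topz, hA2top]
      ring
    have hsum_d : d ∣ ∑ i ∈ range (m+1), G.coeff i * n^i * d^(m+1-i) := by
      refine Finset.dvd_sum (fun i hi => ?_)
      have hilt : i < m + 1 := Finset.mem_range.mp hi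
      exact ((dvd_pow_self d (by omega : m+1-i ≠ 0)).mul_left _)
    have hS0' : ∑ i ∈ range (m+1), G.coeff i * n^i * d^(m+1-i)
        + G.coeff (m+1) * n^(m+1) * d^(m+1-(m+1)) = 0 := by
      rw [← Finset.sum_range_succ]
      exact hS0
    have hd_top : d ∣ G.coeff (m+1) * n^(m+1) := by
      have h2 : G.coeff (m+1) * n^(m+1)
          = -(∑ i ∈ range (m+1), G.coeff i * n^i * d^(m+1-i)) := by
        have h1 : m+1-(m+1) = 0 := by omega
        rw [h1, pow_zero, mul_one] at hS0'
        linarith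
      rw [h2]
      exact dvd_neg.mpr hsum_d
    have hsq : ((-1:ℤ)^(m+1))*((-1:ℤ)^(m+1)) = 1 := by
      rw [← pow_add]
      exact Even.neg_one_pow ⟨m+1, by ring⟩
    have hd_ab_n : d ∣ (a*b) * n^(m+1) := by
      have h3 := hd_top.mul_left ((-1:ℤ)^(m+1))
      have h4 : ((-1:ℤ)^(m+1)) * (G.coeff (m+1) * n^(m+1)) = -((a*b) * n^(m+1)) := by
        rw [hGtop]
        linear_combination (-(a*b*(n:ℤ)^(m+1))) * hsq
      rw [h4] at h3
      exact dvd_neg.mp h3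
    have hcop_nd : IsCoprime d n := by
      rw [Int.isCoprime_iff_gcd_eq_one]
      have hred := t.reduced
      rw [hn_def, hd_def]
      unfold Int.gcd
      rw [Int.natAbs_natCast]
      exact Nat.Coprime.symm hred
    have hd_ab : d ∣ a * b :=
      (hcop_nd.pow_right).dvd_of_dvd_mul_right hd_ab_n
    have hden_le : t.den ≤ (a*b).natAbs := by
      have h5 : d.natAbs ∣ (a*b).natAbs := Int.natAbs_dvd_natAbs.mpr hd_ab
      have h6 : d.natAbs = t.den := by rw [hd_def]; exact Int.natAbs_natCast _
      have hab0 : a*b ≠ 0 := mul_ne_zero ha0 (by omega)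
      have := Nat.le_of_dvd (Int.natAbs_pos.mpr hab0) h5
      omega
    have hdpz : ((Int.castRingHom (ZMod p)) d) ≠ 0 := by
      rw [eq_intCast]
      intro hz
      have h7 : (p:ℤ) ∣ d := (ZMod.intCast_zmod_eq_zero_iff_dvd d p).mp hz
      have h8 : p ∣ t.den := by
        rw [hd_def] at h7
        exact_mod_cast h7
      have := Nat.le_of_dvd t.pos h8
      omega
    have hZeq := sum_coeff_eval (Int.castRingHom (ZMod p)) G (m+1) hGdeg n d hdpz
    rw [hS0, map_zero] at hZeq
    set s : ZMod p := (Int.castRingHom (ZMod p)) n * (((Int.castRingHom (ZMod p)) d))⁻¹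
      with hs_def
    have hGs : (G.map (Int.castRingHom (ZMod p))).eval s = 0 := by
      rcases mul_eq_zero.mp hZeq.symm with hcase | hcase
      · exact absurd hcase (pow_ne_zero _ hdpz)
      · exact hcase
    have hmapG : G.map (Int.castRingHom (ZMod p))
        = C (((b * (n0:ℤ) : ℤ)) : ZMod p) * Abar1 - C ((a : ZMod p)) * Abar2 := by
      rw [hG_def, Polynomial.map_sub, Polynomial.map_mul, Polynomial.map_mul,
        Polynomial.map_C, Polynomial.map_C, eq_intCast, eq_intCast, hAbar1_def, hAbar2_def]
    have hGs2 : (((b * (n0:ℤ) : ℤ)) : ZMod p) * Abar1.eval s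
        - ((a : ZMod p)) * Abar2.eval s = 0 := by
      rw [hmapG] at hGs
      simpa [eval_sub, eval_mul, eval_C] using hGs
    have hn0z : ((n0 : ZMod p)) = z := by
      rw [hn0_def]
      push_cast
      rw [ZMod.natCast_self, ZMod.natCast_val, ZMod.cast_id]
      ring
    have hGs' : ((b : ZMod p)) * z * Abar1.eval s - ((a : ZMod p)) * Abar2.eval s = 0 := by
      rw [← hn0z]
      push_cast at hGs2 ⊢
      linear_combination hGs2
    by_cases hA1s : Abar1.eval s = 0
    · -- common root mod p: contradiction with Bezout
      have hanz : ((a : ZMod p)) ≠ 0 := by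
        intro hz
        have h7 : (p:ℤ) ∣ a := (ZMod.intCast_zmod_eq_zero_iff_dvd a p).mp hz
        have h8 : (p:ℤ) ≤ |a| := Int.le_of_dvd (abs_pos.mpr ha0) ((dvd_abs _ _).mpr h7)
        have h9 : a.natAbs ≤ (a*b).natAbs := by
          rw [Int.natAbs_mul]
          exact Nat.le_mul_of_pos_right _ (by omega)
        rw [Int.abs_eq_natAbs] at h8
        have h10 : p ≤ a.natAbs := by exact_mod_cast h8
        omega
      have hA2s : Abar2.eval s = 0 := by
        have h11 : ((a:ZMod p)) * Abar2.eval s = 0 := by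
          rw [hA1s] at hGs'
          linear_combination -hGs'
        exact (mul_eq_zero.mp h11).resolve_left hanz
      have hbezz := congrArg (fun q => (q.map (Int.castRingHom (ZMod p))).eval s) hbez
      simp only [Polynomial.map_add, Polynomial.map_mul, Polynomial.map_C,
        eval_add, eval_mul, eval_C, ← hAbar1_def, ← hAbar2_def] at hbezz
      rw [hA1s, hA2s] at hbezz
      simp only [mul_zero, zero_mul, add_zero, zero_add, eq_intCast] at hbezz
      have h7 : (p:ℤ) ∣ E := (ZMod.intCast_zmod_eq_zero_iff_dvd E p).mp hbezz.symm
      have h8 : (p:ℤ) ≤ |E| := Int.le_of_dvd (abs_pos.mpr hE0) ((dvd_abs _ _).mpr h7)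
      rw [Int.abs_eq_natAbs] at h8
      have h10 : p ≤ E.natAbs := by exact_mod_cast h8
      omega
    · -- z is in the forbidden image: contradiction
      have hbnz : ((b : ZMod p)) ≠ 0 := by
        intro hz
        have h7 : (p:ℤ) ∣ b := (ZMod.intCast_zmod_eq_zero_iff_dvd b p).mp hz
        have h8 : (p:ℤ) ≤ b := Int.le_of_dvd hb0 h7
        have h9 : b.natAbs ≤ (a*b).natAbs := by
          rw [Int.natAbs_mul]
          exact Nat.le_mul_of_pos_left _ (Int.natAbs_pos.mpr ha0)
        have h10 : p ≤ b.natAbs := by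
          have hbn : (b.natAbs : ℤ) = b := Int.natAbs_of_nonneg (by omega)
          omega
        omega
      have hmulnz : ((b:ZMod p)) * Abar1.eval s ≠ 0 := mul_ne_zero hbnz hA1s
      have hzf : z = f s := by
        rw [hf_def]
        rw [eq_mul_inv_iff_mul_eq₀ hmulnz]
        linear_combination hGs'
      exact hzT (Finset.mem_image.mpr ⟨s,
        Finset.mem_filter.mpr ⟨Finset.mem_univ s, hA1s⟩, hzf.symm⟩)
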